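/- Let the rewriting system on words over the disjoint alphabet X ∪ Y be given by rules αu → (α·u)(α^u) for each α ∈ Y, u ∈ X, where α·u ∈ X and α^u ∈ Y*. Then this rewriting system is terminating and strongly confluent, hence complete, and its irreducible words are exactly those of the form uα with u ∈ X* and α ∈ Y*. -/

import Mathlib

/-- The one-step rewriting relation on words over `X ∪ Y` (encoded as `X ⊕ Y`)
replacing a factor `αu` (`α ∈ Y`, `u ∈ X`) by `(α·u)(α^u)`. -/
def Rw {X Y : Type*} (act : Y → X → X) (exp : Y → X → List Y)
    (w w' : List (X ⊕ Y)) : Prop :=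
  ∃ (l r : List (X ⊕ Y)) (α : Y) (u : X),
    w = l ++ Sum.inr α :: Sum.inl u :: r ∧
    w' = l ++ Sum.inl (act α u) :: ((exp α u).map Sum.inr ++ r)

lemma lexConsInv {a b : ℕ} {l1 l2 : List ℕ}
    (h : List.Lex (· < ·) (a :: l1) (b :: l2)) :
    a < b ∨ (a = b ∧ List.Lex (· < ·) l1 l2) := by
  cases h with
  | rel h => exact Or.inl h
  | cons h => exact Or.inr ⟨rfl, h⟩

/-- No infinite strictly Lex-descending chain of `ℕ`-lists of fixed length. -/
lemma noLexChain : ∀ (k : ℕ) (f : ℕ → List ℕ), (∀ n, (f n).length = k) →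
    (∀ n, List.Lex (· < ·) (f (n+1)) (f n)) → False := by
  intro k
  induction k with
  | zero =>
    intro f hlen hlex
    have h0 : f 0 = [] := List.eq_nil_of_length_eq_zero (hlen 0)
    have := hlex 0
    rw [h0] at this
    generalize f (0 + 1) = x at this
    cases this
  | succ k ih =>
    intro f hlen hlex
    have hcons : ∀ n, f n = (f n).headI :: (f n).tail := by
      intro n
      cases h : f n with
      | nil => exfalso; have := hlen n; rw [h] at this; simp at this
      | cons x t => simp
    set a : ℕ → ℕ := fun n => (f n).headI with ha
    set g : ℕ → List ℕ := fun n => (f n).tail with hg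
    have hstep : ∀ n, a (n+1) < a n ∨ (a (n+1) = a n ∧ List.Lex (· < ·) (g (n+1)) (g n)) := by
      intro n
      have := hlex n
      rw [hcons (n+1), hcons n] at this
      exact lexConsInv this
    have hmono : ∀ n, a (n+1) ≤ a n := by
      intro n; rcases hstep n with h | ⟨h, _⟩ <;> omega
    have hmono' : ∀ m n, m ≤ n → a n ≤ a m := by
      intro m n h
      induction n with
      | zero =>
        have : m = 0 := by omega
        rw [this]
      | succ n ihn =>
        rcases Nat.lt_or_ge m (n+1) with h' | h'
        · exact le_trans (hmono n) (ihn (by omega))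
        · have : m = n+1 := by omega
          rw [this]
    -- find a minimum of a
    obtain ⟨N, hN⟩ := (Nat.lt_wfRel.wf).has_min (Set.range a) ⟨a 0, 0, rfl⟩
    obtain ⟨N0, hN0⟩ := hN.1
    have hconst : ∀ n, N0 ≤ n → a n = a N0 := by
      intro n hn
      have h1 : a n ≤ a N0 := hmono' _ _ hn
      have h2 : ¬ a n < a N0 := by
        rw [hN0]; exact hN.2 (a n) ⟨n, rfl⟩
      omega
    apply ih (fun n => g (N0 + n))
    · intro n
      have := hlen (N0 + n)
      rw [hcons (N0 + n)] at this
      simpa [hg] using this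
    · intro n
      rcases hstep (N0 + n) with h | ⟨_, h⟩
      · exfalso
        have e1 := hconst (N0 + n) (by omega)
        have e2 := hconst (N0 + n + 1) (by omega)
        omega
      · have : N0 + n + 1 = N0 + (n + 1) := by omega
        rwa [this] at h

section RwSec
variable {X Y : Type*} (act : Y → X → X) (exp : Y → X → List Y)

/-- The measure: for each `inl` letter, the number of `inr` letters
before it (plus an accumulator). -/
def mu : List (X ⊕ Y) → ℕ → List ℕ
  | [], _ => []
  | Sum.inl _ :: t, k => k :: mu t k
  | Sum.inr _ :: t, k => mu t (k+1)

lemma mu_append : ∀ (l : List (X ⊕ Y)), ∃ c, ∀ (s : List (X ⊕ Y)) (k : ℕ),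
    mu (l ++ s) k = mu l k ++ mu s (k + c) := by
  intro l
  induction l with
  | nil => exact ⟨0, fun s k => by simp [mu]⟩
  | cons x t ih =>
    obtain ⟨c, hc⟩ := ih
    cases x with
    | inl u => exact ⟨c, fun s k => by simp [mu, hc s k]⟩
    | inr α => exact ⟨c + 1, fun s k => by
        have h2 : k + 1 + c = k + (c + 1) := by omega
        simp only [List.cons_append, mu, List.append_eq, hc s (k+1), h2]⟩

lemma mu_map_inr : ∀ (e : List Y) (r : List (X ⊕ Y)) (k : ℕ),
    mu (X := X) (e.map Sum.inr ++ r) k = mu r (k + e.length) := by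
  intro e
  induction e with
  | nil => intro r k; simp [mu]
  | cons α t ih =>
    intro r k
    have h : ((α :: t).map Sum.inr ++ r : List (X ⊕ Y)) = Sum.inr α :: (t.map Sum.inr ++ r) := by
      simp
    rw [h]
    show mu (t.map Sum.inr ++ r) (k+1) = _
    rw [ih]
    congr 1
    simp
    omega

lemma mu_len : ∀ (w : List (X ⊕ Y)) (k k' : ℕ), (mu w k).length = (mu w k').length := by
  intro w
  induction w with
  | nil => intro k k'; rfl
  | cons x t ih =>
    intro k k'
    cases x with
    | inl u => simp [mu, ih k k']
    | inr α => simp [mu, ih (k+1) (k'+1)]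

lemma mu_decrease {w w' : List (X ⊕ Y)} (h : Rw act exp w w') :
    List.Lex (· < ·) (mu w' 0) (mu w 0) ∧ (mu w' 0).length = (mu w 0).length := by
  obtain ⟨l, r, α, u, hw, hw'⟩ := h
  obtain ⟨c, hc⟩ := mu_append (X := X) (Y := Y) l
  subst hw hw'
  rw [hc, hc]
  simp only [mu, mu_map_inr]
  constructor
  · apply List.Lex.append_left
    exact List.Lex.rel (Nat.lt_succ_self _)
  · simp only [List.length_append, List.length_cons]
    congr 2
    apply mu_len

lemma terminating (f : ℕ → List (X ⊕ Y)) (hf : ∀ n, Rw act exp (f n) (f (n+1))) : False := by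
  apply noLexChain (mu (f 0) 0).length (fun n => mu (f n) 0)
  · intro n
    induction n with
    | zero => rfl
    | succ n ih => rw [(mu_decrease act exp (hf n)).2, ih]
  · intro n
    exact (mu_decrease act exp (hf n)).1

end RwSec

section Conf
variable {X Y : Type*} (act : Y → X → X) (exp : Y → X → List Y)

lemma rw_resolve {l1 r1 l2 r2 : List (X ⊕ Y)} {α β : Y} {u v : X}
    (h : l1 ++ Sum.inr α :: Sum.inl u :: r1 = l2 ++ Sum.inr β :: Sum.inl v :: r2) :
    (l1 = l2 ∧ α = β ∧ u = v ∧ r1 = r2) ∨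
    (∃ m, l2 = l1 ++ Sum.inr α :: Sum.inl u :: m ∧
      r1 = m ++ Sum.inr β :: Sum.inl v :: r2) ∨
    (∃ m, l1 = l2 ++ Sum.inr β :: Sum.inl v :: m ∧
      r2 = m ++ Sum.inr α :: Sum.inl u :: r1) := by
  rcases List.append_eq_append_iff.mp h with ⟨a', ha1, ha2⟩ | ⟨c', hc1, hc2⟩
  · cases a' with
    | nil =>
      simp only [List.nil_append] at ha2
      injection ha2 with h1 h2
      injection h1 with h1
      injection h2 with h2 h3
      injection h2 with h2
      exact Or.inl ⟨by simpa using ha1.symm, h1, h2, h3⟩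
    | cons x a'' =>
      injection ha2 with h1 h2
      subst h1
      cases a'' with
      | nil => simp at h2
      | cons y a''' =>
        injection h2 with h2 h3
        subst h2
        exact Or.inr (Or.inl ⟨a''', by rw [ha1], h3⟩)
  · cases c' with
    | nil =>
      simp only [List.nil_append] at hc2
      injection hc2 with h1 h2
      injection h1 with h1
      injection h2 with h2 h3
      injection h2 with h2
      exact Or.inl ⟨by simpa using hc1, h1.symm, h2.symm, h3.symm⟩
    | cons x c'' =>
      injection hc2 with h1 h2
      subst h1
      cases c'' with
      | nil => simp at h2
      | cons y c''' =>
        injection h2 with h2 h3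
        subst h2
        exact Or.inr (Or.inr ⟨c''', by rw [hc1], h3⟩)

lemma sconf_aux (l1 m r2 : List (X ⊕ Y)) (α β : Y) (u v : X) : ∃ w',
    Rw act exp (l1 ++ Sum.inl (act α u) ::
      ((exp α u).map Sum.inr ++ (m ++ Sum.inr β :: Sum.inl v :: r2))) w' ∧
    Rw act exp ((l1 ++ Sum.inr α :: Sum.inl u :: m) ++ Sum.inl (act β v) ::
      ((exp β v).map Sum.inr ++ r2)) w' := by
  refine ⟨(l1 ++ Sum.inl (act α u) :: ((exp α u).map Sum.inr ++ m)) ++ Sum.inl (act β v) ::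
      ((exp β v).map Sum.inr ++ r2), ?_, ?_⟩
  · exact ⟨l1 ++ Sum.inl (act α u) :: ((exp α u).map Sum.inr ++ m), r2, β, v,
      by simp, by simp⟩
  · exact ⟨l1, m ++ Sum.inl (act β v) :: ((exp β v).map Sum.inr ++ r2), α, u,
      by simp, by simp⟩

lemma sconf {w w1 w2 : List (X ⊕ Y)} (h1 : Rw act exp w w1) (h2 : Rw act exp w w2) :
    ∃ w', Relation.ReflGen (Rw act exp) w1 w' ∧ Relation.ReflGen (Rw act exp) w2 w' := by
  obtain ⟨l1, r1, α, u, hw1, hw1'⟩ := h1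
  obtain ⟨l2, r2, β, v, hw2, hw2'⟩ := h2
  rcases rw_resolve (hw1 ▸ hw2) with ⟨e1, e2, e3, e4⟩ | ⟨m, hm1, hm2⟩ | ⟨m, hm1, hm2⟩
  · subst e1; subst e2; subst e3; subst e4
    exact ⟨w1, Relation.ReflGen.refl, hw2' ▸ hw1' ▸ Relation.ReflGen.refl⟩
  · obtain ⟨w', hA, hB⟩ := sconf_aux act exp l1 m r2 α β u v
    subst hm1; subst hm2
    refine ⟨w', ?_, ?_⟩
    · rw [hw1']; exact Relation.ReflGen.single hA
    · rw [hw2']; exact Relation.ReflGen.single (by simpa using hB)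
  · obtain ⟨w', hA, hB⟩ := sconf_aux act exp l2 m r1 β α v u
    subst hm1; subst hm2
    refine ⟨w', ?_, ?_⟩
    · rw [hw1']; exact Relation.ReflGen.single (by simpa using hB)
    · rw [hw2']; exact Relation.ReflGen.single hA

end Conf

section Irred
variable {X Y : Type*} (act : Y → X → X) (exp : Y → X → List Y)

lemma normal_irred (xs : List X) (ys : List Y) (w' : List (X ⊕ Y)) :
    ¬ Rw act exp (xs.map Sum.inl ++ ys.map Sum.inr) w' := by
  rintro ⟨l, r, α, u, hw, -⟩
  rcases List.append_eq_append_iff.mp hw.symm with ⟨a', ha1, ha2⟩ | ⟨c', hc1, hc2⟩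
  · cases a' with
    | nil =>
      simp only [List.nil_append] at ha2
      have : Sum.inl u ∈ ys.map (Sum.inr : Y → X ⊕ Y) := by
        rw [← ha2]; simp
      simp at this
    | cons z a'' =>
      injection ha2 with h1 h2
      have : Sum.inr α ∈ xs.map (Sum.inl : X → X ⊕ Y) := by
        rw [ha1, ← h1]; simp
      simp at this
  · have : Sum.inl u ∈ ys.map (Sum.inr : Y → X ⊕ Y) := by
      rw [hc2]; simp
    simp at this

lemma irred_form {w : List (X ⊕ Y)} (h : ∀ w', ¬ Rw act exp w w') :
    ∃ (xs : List X) (ys : List Y), w = xs.map Sum.inl ++ ys.map Sum.inr := by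
  induction w with
  | nil => exact ⟨[], [], rfl⟩
  | cons x t ih =>
    have ht : ∀ w', ¬ Rw act exp t w' := by
      rintro w' ⟨l, r, α, u, hw, hw'⟩
      exact h (x :: w') ⟨x :: l, r, α, u, by rw [hw]; rfl, by rw [hw']; rfl⟩
    obtain ⟨xs, ys, rfl⟩ := ih ht
    cases x with
    | inl u => exact ⟨u :: xs, ys, rfl⟩
    | inr β =>
      cases xs with
      | nil => exact ⟨[], β :: ys, rfl⟩
      | cons x' xs' =>
        exfalso
        exact h _ ⟨[], xs'.map Sum.inl ++ ys.map Sum.inr, β, x', by simp, rfl⟩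

end Irred

section NF
variable {X Y : Type*} (act : Y → X → X) (exp : Y → X → List Y)

open Relation

lemma rw_context {w w' : List (X ⊕ Y)} (l r : List (X ⊕ Y)) (h : Rw act exp w w') :
    Rw act exp (l ++ w ++ r) (l ++ w' ++ r) := by
  obtain ⟨l0, r0, α, u, h1, h2⟩ := h
  exact ⟨l ++ l0, r0 ++ r, α, u, by simp [h1], by simp [h2]⟩

lemma rtg_context {w w' : List (X ⊕ Y)} (l r : List (X ⊕ Y))
    (h : ReflTransGen (Rw act exp) w w') :
    ReflTransGen (Rw act exp) (l ++ w ++ r) (l ++ w' ++ r) := by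
  induction h with
  | refl => exact ReflTransGen.refl
  | tail _ hstep ih => exact ih.tail (rw_context act exp l r hstep)

def pushR : List Y → X → X × List Y
  | [], u => (u, [])
  | α :: t, u => ((pushR t (act α u)).1, (pushR t (act α u)).2 ++ exp α u)

def push (ys : List Y) (u : X) : X × List Y := pushR act exp ys.reverse u

lemma push_reduces (ys : List Y) (u : X) :
    ReflTransGen (Rw act exp) (ys.map Sum.inr ++ [Sum.inl u])
      (Sum.inl (push act exp ys u).1 :: (push act exp ys u).2.map Sum.inr) := by
  induction ys using List.reverseRecOn generalizing u with
  | nil =>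
    simp only [push, pushR, List.map_nil, List.nil_append, List.reverse_nil]
    exact ReflTransGen.refl
  | append_singleton ys α ih =>
    have hpush : push act exp (ys ++ [α]) u =
        ((push act exp ys (act α u)).1, (push act exp ys (act α u)).2 ++ exp α u) := by
      simp [push, pushR]
    have step1 : Rw act exp ((ys ++ [α]).map Sum.inr ++ [Sum.inl u])
        (ys.map Sum.inr ++ Sum.inl (act α u) :: ((exp α u).map Sum.inr ++ [])) :=
      ⟨ys.map Sum.inr, [], α, u, by simp, rfl⟩
    refine ReflTransGen.head step1 ?_
    have h2 := rtg_context act exp [] ((exp α u).map Sum.inr) (ih (act α u))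
    simp only [List.nil_append] at h2
    have e1 : ys.map Sum.inr ++ Sum.inl (act α u) :: ((exp α u).map Sum.inr ++ []) =
        (ys.map (Sum.inr : Y → X ⊕ Y) ++ [Sum.inl (act α u)]) ++ (exp α u).map Sum.inr := by
      simp
    have e2 : (Sum.inl (push act exp ys (act α u)).1 ::
          (push act exp ys (act α u)).2.map Sum.inr) ++ (exp α u).map Sum.inr =
        Sum.inl (push act exp (ys ++ [α]) u).1 ::
          (push act exp (ys ++ [α]) u).2.map Sum.inr := by
      rw [hpush]; simp
    rw [e1, ← e2]
    exact h2

def nfGo : List X → List Y → List (X ⊕ Y) → List X × List Y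
  | xs, ys, [] => (xs, ys)
  | xs, ys, Sum.inr α :: t => nfGo xs (ys ++ [α]) t
  | xs, ys, Sum.inl u :: t =>
      nfGo (xs ++ [(push act exp ys u).1]) (push act exp ys u).2 t

lemma nfGo_reduces : ∀ (t : List (X ⊕ Y)) (xs : List X) (ys : List Y),
    ReflTransGen (Rw act exp) (xs.map Sum.inl ++ ys.map Sum.inr ++ t)
      ((nfGo act exp xs ys t).1.map Sum.inl ++ (nfGo act exp xs ys t).2.map Sum.inr) := by
  intro t
  induction t with
  | nil =>
    intro xs ys
    simp only [nfGo, List.append_nil]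
    exact ReflTransGen.refl
  | cons x t ih =>
    intro xs ys
    cases x with
    | inr α =>
      have e : xs.map Sum.inl ++ ys.map Sum.inr ++ (Sum.inr α :: t) =
          xs.map Sum.inl ++ (ys ++ [α]).map Sum.inr ++ t := by simp
      rw [show nfGo act exp xs ys (Sum.inr α :: t) = nfGo act exp xs (ys ++ [α]) t from rfl,
        e]
      exact ih xs (ys ++ [α])
    | inl u =>
      have e : xs.map Sum.inl ++ ys.map Sum.inr ++ (Sum.inl u :: t) =
          xs.map Sum.inl ++ (ys.map Sum.inr ++ [Sum.inl u]) ++ t := by simp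
      have h1 := rtg_context act exp (xs.map Sum.inl) t (push_reduces act exp ys u)
      have e2 : xs.map Sum.inl ++ (Sum.inl (push act exp ys u).1 ::
            (push act exp ys u).2.map Sum.inr) ++ t =
          (xs ++ [(push act exp ys u).1]).map Sum.inl ++
            (push act exp ys u).2.map Sum.inr ++ t := by simp
      rw [show nfGo act exp xs ys (Sum.inl u :: t) =
        nfGo act exp (xs ++ [(push act exp ys u).1]) (push act exp ys u).2 t from rfl, e]
      exact ReflTransGen.trans (e2 ▸ h1) (ih _ _)

lemma rtg_to_eqvGen {w w' : List (X ⊕ Y)} (h : ReflTransGen (Rw act exp) w w') :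
    EqvGen (Rw act exp) w w' := by
  induction h with
  | refl => exact EqvGen.refl _
  | tail _ hstep ih => exact EqvGen.trans _ _ _ ih (EqvGen.rel _ _ hstep)

lemma irred_rtg {w w' : List (X ⊕ Y)} (h : ∀ v, ¬ Rw act exp w v)
    (hr : ReflTransGen (Rw act exp) w w') : w' = w := by
  rcases hr.cases_head with h1 | ⟨b, hb, -⟩
  · exact h1.symm
  · exact absurd hb (h b)

lemma cr : ∀ a b c, Rw act exp a b → Rw act exp a c →
    ∃ d, ReflGen (Rw act exp) b d ∧ ReflTransGen (Rw act exp) c d := by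
  intro a b c h1 h2
  obtain ⟨d, hb, hc⟩ := sconf act exp h1 h2
  exact ⟨d, hb, hc.to_reflTransGen⟩

lemma eqv_join {a b : List (X ⊕ Y)} (h : EqvGen (Rw act exp) a b) :
    Join (ReflTransGen (Rw act exp)) a b := by
  have he := Relation.equivalence_join_reflTransGen (cr act exp)
  induction h with
  | rel a b h => exact ⟨b, ReflTransGen.single h, ReflTransGen.refl⟩
  | refl a => exact he.refl a
  | symm a b _ ih => exact he.symm ih
  | trans a b c _ _ ih1 ih2 => exact he.trans ih1 ih2

lemma unique_nf (w : List (X ⊕ Y)) : ∃! w',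
    EqvGen (Rw act exp) w w' ∧ ∀ w'', ¬ Rw act exp w' w'' := by
  set n := nfGo act exp [] [] w with hn
  refine ⟨n.1.map Sum.inl ++ n.2.map Sum.inr, ⟨?_, fun w'' => normal_irred act exp _ _ _⟩, ?_⟩
  · apply rtg_to_eqvGen
    have := nfGo_reduces act exp w [] []
    simpa using this
  · rintro v ⟨hv, hirr⟩
    have h1 : EqvGen (Rw act exp) (n.1.map Sum.inl ++ n.2.map Sum.inr) v := by
      apply EqvGen.trans _ w _
      · apply EqvGen.symm
        apply rtg_to_eqvGen
        have := nfGo_reduces act exp w [] []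
        simpa using this
      · exact hv
    obtain ⟨d, hd1, hd2⟩ := eqv_join act exp h1
    have e1 : d = n.1.map Sum.inl ++ n.2.map Sum.inr :=
      irred_rtg act exp (fun v => normal_irred act exp _ _ _) hd1
    have e2 : d = v := irred_rtg act exp hirr hd2
    rw [← e1, ← e2]

end NF

theorem stmt_18 {X Y : Type*} (act : Y → X → X) (exp : Y → X → List Y) :
    -- terminating
    (∀ f : ℕ → List (X ⊕ Y),
      ¬ (∀ n, Rw act exp (f n) (f (n + 1)) ∧ f n ≠ f (n + 1))) ∧
    -- strongly confluent
    (∀ w w1 w2, Rw act exp w w1 → Rw act exp w w2 →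
      ∃ w', Relation.ReflGen (Rw act exp) w1 w' ∧
        Relation.ReflGen (Rw act exp) w2 w') ∧
    -- irreducible words are exactly those of the form `uα`, `u ∈ X*`, `α ∈ Y*`
    (∀ w : List (X ⊕ Y), (∀ w', ¬ Rw act exp w w') ↔
      ∃ (xs : List X) (ys : List Y),
        w = xs.map Sum.inl ++ ys.map Sum.inr) ∧
    -- completeness: each equivalence class contains a unique irreducible word
    (∀ w : List (X ⊕ Y), ∃! w',
      Relation.EqvGen (Rw act exp) w w' ∧ ∀ w'', ¬ Rw act exp w' w'') := by
  refine ⟨?_, ?_, ?_, ?_⟩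
  · intro f hf
    exact terminating act exp f (fun n => (hf n).1)
  · intro w w1 w2 h1 h2
    exact sconf act exp h1 h2
  · intro w
    constructor
    · exact fun h => irred_form act exp h
    · rintro ⟨xs, ys, rfl⟩ w' hr
      exact normal_irred act exp xs ys w' hr
  · exact unique_nf act exp
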